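/- For every integer q ≥ 4, 2^q · (q+1) > binomial(2q+2, q) - 3·binomial(2q+2, q-2). -/
import Mathlib

lemma aux15 (k : ℕ) :
    (2*k+6).choose (k+2) * ((k+2)*(k+1)) = (2*k+6).choose k * ((k+6)*(k+5)) := by
  have h1 := Nat.choose_succ_right_eq (2*k+6) (k+1)
  have h2 := Nat.choose_succ_right_eq (2*k+6) k
  have e1 : 2*k+6 - (k+1) = k+5 := by omega
  have e2 : 2*k+6 - k = k+6 := by omega
  rw [e1] at h1; rw [e2] at h2
  calc (2*k+6).choose (k+2) * ((k+2)*(k+1))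
      = ((2*k+6).choose (k+1+1) * (k+1+1)) * (k+1) := by ring
    _ = ((2*k+6).choose (k+1) * (k+5)) * (k+1) := by rw [h1]
    _ = ((2*k+6).choose (k+1) * (k+1)) * (k+5) := by ring
    _ = ((2*k+6).choose k * (k+6)) * (k+5) := by rw [h2]
    _ = (2*k+6).choose k * ((k+6)*(k+5)) := by ring

lemma aux15' (k : ℕ) (hk : 4 ≤ k) :
    (2*k+6).choose (k+2) ≤ 3 * (2*k+6).choose k := by
  have h := aux15 k
  have hle : (k+6)*(k+5) ≤ 3*((k+2)*(k+1)) := by nlinarith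
  have : (2*k+6).choose (k+2) * ((k+2)*(k+1)) ≤ 3 * (2*k+6).choose k * ((k+2)*(k+1)) := by
    calc (2*k+6).choose (k+2) * ((k+2)*(k+1)) = (2*k+6).choose k * ((k+6)*(k+5)) := h
      _ ≤ (2*k+6).choose k * (3*((k+2)*(k+1))) := Nat.mul_le_mul_left _ hle
      _ = 3 * (2*k+6).choose k * ((k+2)*(k+1)) := by ring
  exact Nat.le_of_mul_le_mul_right this (by positivity)

theorem stmt15 (q : ℕ) (hq : 4 ≤ q) :
    ((2 * q + 2).choose q : ℤ) - 3 * (2 * q + 2).choose (q - 2) < 2 ^ q * (q + 1) := by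
  match q, hq with
  | 4, _ => norm_num [Nat.choose]
  | 5, _ => norm_num [Nat.choose]
  | (k+6), _ =>
    have h := aux15' (k+4) (by omega)
    have e : 2*(k+6)+2 = 2*(k+4)+6 := by ring
    have e2 : k+6-2 = k+4 := by omega
    rw [e, e2]
    have e3 : k+6 = (k+4)+2 := by omega
    rw [e3]
    have hz : ((2*(k+4)+6).choose ((k+4)+2) : ℤ) - 3 * (2*(k+4)+6).choose (k+4) ≤ 0 :=
      sub_nonpos.mpr (by exact_mod_cast h)
    calc ((2*(k+4)+6).choose ((k+4)+2) : ℤ) - 3 * (2*(k+4)+6).choose (k+4) ≤ 0 := hz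
      _ < 2 ^ ((k+4)+2) * (((k+4):ℤ)+2+1) := by positivity
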